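/- Let A be a δ_p-ring and I ⊆ A a square-zero δ_p-ideal. Then there is an exact sequence of abelian groups 0 → I^{δ_p = 1} → G_m^{δ_p}(A) → G_m^{δ_p}(A/I), where I^{δ_p=1} = {a ∈ I : δ_p(a) = a}, G_m^{δ_p}(B) denotes the group of units u with δ_p(u) = 0, and the first map sends a to 1 + a. -/

import Mathlib

/-- A `δ_p`-ring: a commutative ring `A` with an operation `δ : A → A` satisfying
`δ 0 = δ 1 = 0`, the additive identity
`δ (x+y) = δ x + δ y + (x^p + y^p - (x+y)^p)/p`
(written with the exact integer coefficients `(p.choose i)/p` for `0 < i < p`),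
and the multiplicative identity
`δ (x*y) = x^p δ y + y^p δ x + p δ x δ y`. -/
structure DeltaRing (p : ℕ) (A : Type*) [CommRing A] where
  δ : A → A
  delta_zero : δ 0 = 0
  delta_one : δ 1 = 0
  delta_add : ∀ x y : A, δ (x + y) = δ x + δ y -
      ∑ i ∈ Finset.Ioo 0 p, ((p.choose i / p : ℕ) : A) * x ^ i * y ^ (p - i)
  delta_mul : ∀ x y : A,
      δ (x * y) = x ^ p * δ y + y ^ p * δ x + (p : A) * δ x * δ y

/-- Key computation: if `a * a = 0` then `δ (1 + a) = δ a - a`. -/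
theorem DeltaRing.delta_one_add {p : ℕ} (hp : p.Prime) {A : Type*} [CommRing A]
    (D : DeltaRing p A) {a : A} (ha : a * a = 0) :
    D.δ (1 + a) = D.δ a - a := by
  have hpow : ∀ n, 2 ≤ n → a ^ n = 0 := by
    intro n hn
    have : a ^ n = a ^ 2 * a ^ (n - 2) := by
      rw [← pow_add]; congr 1; omega
    rw [this, sq, ha, zero_mul]
  have h2p := hp.two_le
  have hsum : ∑ i ∈ Finset.Ioo 0 p, ((p.choose i / p : ℕ) : A) * 1 ^ i * a ^ (p - i) = a := by
    have hmem : p - 1 ∈ Finset.Ioo 0 p := by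
      simp [Finset.mem_Ioo]; omega
    rw [Finset.sum_eq_single_of_mem (p - 1) hmem]
    · have h1 : p.choose (p - 1) = p := by
        have := Nat.choose_symm (n := p) (k := 1) hp.one_lt.le
        simpa [Nat.choose_one_right] using this
      have h2 : p - (p - 1) = 1 := by omega
      rw [h1, h2, Nat.div_self hp.pos]
      simp
    · intro i hi hne
      simp only [Finset.mem_Ioo] at hi
      have : a ^ (p - i) = 0 := hpow _ (by omega)
      rw [this, mul_zero]
  rw [D.delta_add 1 a, D.delta_one, hsum, zero_add]

/-- For a square-zero δ_p-ideal , there is an exact sequence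
: the map 
sends  injectively to rank 1 units of , and its image
is exactly the kernel of the map to the rank 1 units of . -/
theorem rankOneUnits_squareZero_exact {p : ℕ} (hp : p.Prime) {A : Type*} [CommRing A]
    (D : DeltaRing p A) (I : Ideal A)
    (hsq : ∀ a ∈ I, ∀ b ∈ I, a * b = 0)
    (hδ : ∀ a ∈ I, D.δ a ∈ I)
    (D' : DeltaRing p (A ⧸ I))
    (hcompat : ∀ x : A, D'.δ (Ideal.Quotient.mk I x) = Ideal.Quotient.mk I (D.δ x)) :
    (∀ a ∈ I, D.δ a = a → IsUnit (1 + a) ∧ D.δ (1 + a) = 0) ∧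
    (∀ a b : A, (1 : A) + a = 1 + b → a = b) ∧
    (∀ u : Aˣ, D.δ (u : A) = 0 →
      (Ideal.Quotient.mk I (u : A) = 1 ↔ ∃ a ∈ I, D.δ a = a ∧ (u : A) = 1 + a)) := by
  refine ⟨?_, ?_, ?_⟩
  · intro a haI hδa
    have ha : a * a = 0 := hsq a haI a haI
    refine ⟨IsUnit.of_mul_eq_one (1 - a) (by linear_combination -ha), ?_⟩
    rw [D.delta_one_add hp ha, hδa, sub_self]
  · intro a b h
    exact add_left_cancel h
  · intro u hu
    constructor
    · intro h
      have hmem : (u : A) - 1 ∈ I := by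
        rwa [← Ideal.Quotient.eq_zero_iff_mem, map_sub, map_one, sub_eq_zero]
      refine ⟨(u : A) - 1, hmem, ?_, by ring⟩
      have ha : ((u : A) - 1) * ((u : A) - 1) = 0 := hsq _ hmem _ hmem
      have := D.delta_one_add hp ha
      rw [show (1 : A) + ((u : A) - 1) = (u : A) by ring, hu] at this
      linear_combination -this
    · rintro ⟨a, haI, -, hua⟩
      rw [hua, map_add, map_one, Ideal.Quotient.eq_zero_iff_mem.mpr haI, add_zero]
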